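/- If G is a finite simple graph and I is the set of isolated vertices of G, then the union, over all Z-Grundy dominating sequences S of G, of the vertex sets of S equals V(G) \ I. -/

import Mathlib

/-- A Z-sequence in a graph `G`: a list of distinct vertices such that each vertex
has a neighbor not contained in the closed neighborhood of any earlier vertex. -/
def IsZSeq {V : Type*} (G : SimpleGraph V) (l : List V) : Prop :=
  l.Nodup ∧ ∀ i : Fin l.length, ∃ w : V, G.Adj (l.get i) w ∧
    ∀ j : Fin l.length, (j : ℕ) < (i : ℕ) → w ≠ l.get j ∧ ¬ G.Adj (l.get j) w

/-- A Z-Grundy dominating sequence: a Z-sequence of maximum length. -/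
def IsZGrundySeq {V : Type*} (G : SimpleGraph V) (l : List V) : Prop :=
  IsZSeq G l ∧ ∀ l' : List V, IsZSeq G l' → l'.length ≤ l.length

/-- A maximum Z-sequence exists in a finite graph. -/
lemma exists_maxZSeq {V : Type*} [Fintype V] (G : SimpleGraph V) :
    ∃ l : List V, IsZGrundySeq G l := by
  classical
  set P : ℕ → Prop := fun n => ∃ l : List V, IsZSeq G l ∧ l.length = n with hP
  have h0 : P 0 := ⟨[], ⟨List.nodup_nil, fun i => absurd i.isLt (by simp)⟩, rfl⟩
  have hbound : ∀ n, P n → n ≤ Fintype.card V := by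
    rintro n ⟨l, hl, rfl⟩
    exact hl.1.length_le_card
  have hspec : P (Nat.findGreatest P (Fintype.card V)) :=
    Nat.findGreatest_spec (Nat.zero_le _) h0
  obtain ⟨l, hl, hlen⟩ := hspec
  refine ⟨l, hl, fun l' hl' => ?_⟩
  rw [hlen]
  exact Nat.le_findGreatest (hbound _ ⟨l', hl', rfl⟩) ⟨l', hl', rfl⟩

/-- If `x` is a valid fresh witness at some position of a Z-sequence `l`, then the
reversal of a witness list of `l` (with `x` chosen as the witness at that position)
is a Z-sequence of the same length containing `x`. -/
lemma witness_flip {V : Type*} (G : SimpleGraph V) {l : List V} (hl : IsZSeq G l) {x : V}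
    (hx : ∃ t : Fin l.length, G.Adj (l.get t) x ∧ ∀ j : Fin l.length, (j : ℕ) < (t : ℕ) →
      x ≠ l.get j ∧ ¬ G.Adj (l.get j) x) :
    ∃ l' : List V, IsZSeq G l' ∧ l'.length = l.length ∧ x ∈ l' := by
  classical
  obtain ⟨hnd, hzs⟩ := hl
  choose W hWadj hWf using hzs
  obtain ⟨t0, ht0a, ht0f⟩ := hx
  set W' : Fin l.length → V := fun i => if i = t0 then x else W i with hW'
  have hadj : ∀ i, G.Adj (l.get i) (W' i) := by
    intro i
    by_cases h : i = t0
    · simp only [hW', if_pos h]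
      exact h ▸ ht0a
    · simp only [hW', if_neg h]
      exact hWadj i
  have hf : ∀ i j : Fin l.length, (j : ℕ) < (i : ℕ) →
      W' i ≠ l.get j ∧ ¬ G.Adj (l.get j) (W' i) := by
    intro i j hij
    by_cases h : i = t0
    · simp only [hW', if_pos h]
      exact ht0f j (h ▸ hij)
    · simp only [hW', if_neg h]
      exact hWf i j hij
  have hinj : Function.Injective W' := by
    intro a b hab
    by_contra hne
    rcases lt_or_gt_of_ne hne with h | h
    · have h2 := (hf b a h).2
      rw [← hab] at h2
      exact h2 (hadj a)
    · have h2 := (hf a b h).2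
      rw [hab] at h2
      exact h2 (hadj b)
  refine ⟨List.ofFn (fun p => W' p.rev), ⟨List.nodup_ofFn.mpr (hinj.comp Fin.rev_injective), ?_⟩,
    List.length_ofFn, ?_⟩
  · intro p
    have hlen : (List.ofFn (fun p : Fin l.length => W' p.rev)).length = l.length :=
      List.length_ofFn
    have hget : ∀ q : Fin (List.ofFn (fun p : Fin l.length => W' p.rev)).length,
        (List.ofFn (fun p : Fin l.length => W' p.rev)).get q = W' (Fin.cast hlen q).rev :=
      fun q => List.get_ofFn _ q
    refine ⟨l.get (Fin.cast hlen p).rev, ?_, ?_⟩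
    · rw [hget p]
      exact (hadj _).symm
    · intro q hqp
      rw [hget q]
      have hlt : ((Fin.cast hlen p).rev : ℕ) < ((Fin.cast hlen q).rev : ℕ) := by
        have h1 : ((Fin.cast hlen q) : ℕ) < ((Fin.cast hlen p) : ℕ) := hqp
        simp only [Fin.val_rev]
        omega
      have hh := hf (Fin.cast hlen q).rev (Fin.cast hlen p).rev hlt
      exact ⟨fun he => hh.1 he.symm, fun ha => hh.2 ha.symm⟩
  · rw [List.mem_ofFn]
    exact ⟨t0.rev, by simp [hW', Fin.rev_rev]⟩

/-- If `x` is non-isolated, not in a maximum Z-sequence `L`, and not a valid fresh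
witness at any position of `L`, we can insert `x` into `L` (replacing the vertex at the
critical position) obtaining a Z-sequence of the same length containing `x`. -/
lemma insert_case {V : Type*} (G : SimpleGraph V) {L : List V} (hL : IsZSeq G L)
    (hmax : ∀ l', IsZSeq G l' → l'.length ≤ L.length) {x : V}
    (hxw : ∃ w, G.Adj x w) (hxL : x ∉ L)
    (h2 : ¬ ∃ t : Fin L.length, G.Adj (L.get t) x ∧ ∀ j : Fin L.length, (j : ℕ) < (t : ℕ) →
      x ≠ L.get j ∧ ¬ G.Adj (L.get j) x) :
    ∃ l' : List V, IsZSeq G l' ∧ l'.length = L.length ∧ x ∈ l' := by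
  classical
  obtain ⟨hnd, hzs⟩ := hL
  set k := L.length with hk
  choose W hWadj hWf using hzs
  set P : ℕ → Prop := fun t => ∃ w, G.Adj x w ∧ ∀ j : Fin k, (j : ℕ) < t →
    w ≠ L.get j ∧ ¬ G.Adj (L.get j) w with hPdef
  have hP0 : P 0 := by
    obtain ⟨w, hw⟩ := hxw
    exact ⟨w, hw, fun j hj => absurd hj (Nat.not_lt_zero _)⟩
  have hPk : ¬ P k := by
    rintro ⟨w, hw, hfr⟩
    have hz : IsZSeq G (L ++ [x]) := by
      constructor
      · rw [List.nodup_append]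
        exact ⟨hnd, List.nodup_singleton x, by
          intro a ha b hax
          rw [List.mem_singleton] at hax
          exact fun hab => hxL (by rw [← hax, ← hab]; exact ha)⟩
      · intro p
        have hplen : (L ++ [x]).length = k + 1 := by simp [hk]
        have hp : (p : ℕ) < k + 1 := hplen ▸ p.isLt
        by_cases hpk : (p : ℕ) < k
        · have hgetp : (L ++ [x]).get p = L.get ⟨p, hpk⟩ := by
            rw [List.get_eq_getElem, List.get_eq_getElem]
            exact List.getElem_append_left hpk
          refine ⟨W ⟨p, hpk⟩, by rw [hgetp]; exact hWadj ⟨p, hpk⟩, ?_⟩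
          intro q hq
          have hqk : (q : ℕ) < k := lt_trans hq hpk
          have hgetq : (L ++ [x]).get q = L.get ⟨q, hqk⟩ := by
            rw [List.get_eq_getElem, List.get_eq_getElem]
            exact List.getElem_append_left hqk
          rw [hgetq]
          exact hWf ⟨p, hpk⟩ ⟨q, hqk⟩ hq
        · have hpk' : (p : ℕ) = k := by omega
          have hgetp : (L ++ [x]).get p = x := by
            rw [List.get_eq_getElem]
            rw [List.getElem_append_right (by omega)]
            simp [hpk', hk]
          refine ⟨w, by rw [hgetp]; exact hw, ?_⟩
          intro q hq
          have hqk : (q : ℕ) < k := by omega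
          have hgetq : (L ++ [x]).get q = L.get ⟨q, hqk⟩ := by
            rw [List.get_eq_getElem, List.get_eq_getElem]
            exact List.getElem_append_left hqk
          rw [hgetq]
          exact hfr ⟨q, hqk⟩ hqk
    have hle := hmax _ hz
    simp [hk] at hle
  have hex : ∃ t, ¬ P t := ⟨k, hPk⟩
  set m := Nat.find hex with hm
  have hfs : ¬ P m := Nat.find_spec hex
  have hm1 : 1 ≤ m := by
    by_contra h
    have hm0 : m = 0 := by omega
    exact (hm0 ▸ hfs) hP0
  have hmk : m ≤ k := by
    by_contra h
    exact (Nat.find_min hex (show k < m by omega)) hPk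
  set i := m - 1 with hi
  have hik : i < k := by omega
  have hPi : P i := by
    by_contra h
    exact absurd (Nat.find_min hex (show i < m by omega)) (by simpa using h)
  have hPi1 : ¬ P (i + 1) := by
    have : i + 1 = m := by omega
    rw [this]
    exact hfs
  obtain ⟨w0, hw0a, hw0f⟩ := hPi
  have hdom : ∀ w, G.Adj x w → ∃ j : Fin k, (j : ℕ) < i + 1 ∧
      (w = L.get j ∨ G.Adj (L.get j) w) := by
    intro w hw
    by_contra hc
    push_neg at hc
    refine hPi1 ⟨w, hw, fun j hj => ?_⟩
    have := hc j hj
    exact ⟨this.1, this.2⟩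
  set f : Fin k → V := fun p => if (p : ℕ) = i then x else L.get p with hfdef
  have hinj : Function.Injective f := by
    intro a b hab
    simp only [hfdef] at hab
    by_cases ha : (a : ℕ) = i <;> by_cases hb : (b : ℕ) = i
    · exact Fin.ext (by omega)
    · rw [if_pos ha, if_neg hb] at hab
      exact absurd (hab ▸ List.mem_iff_get.mpr ⟨b, rfl⟩) hxL
    · rw [if_neg ha, if_pos hb] at hab
      exact absurd (hab.symm ▸ List.mem_iff_get.mpr ⟨a, rfl⟩) hxL
    · rw [if_neg ha, if_neg hb] at hab
      exact List.nodup_iff_injective_get.mp hnd hab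
  have hlen : (List.ofFn f).length = k := List.length_ofFn (f := f)
  have hget : ∀ q : Fin (List.ofFn f).length, (List.ofFn f).get q = f (Fin.cast hlen q) :=
    fun q => List.get_ofFn f q
  refine ⟨List.ofFn f, ⟨List.nodup_ofFn.mpr hinj, ?_⟩, hlen, ?_⟩
  · intro p
    set p' : Fin k := Fin.cast hlen p with hp'
    have hgp : (List.ofFn f).get p = f p' := hget p
    by_cases hpi : (p' : ℕ) = i
    · -- position i : the new vertex x, with witness w0
      have hfx : f p' = x := by simp [hfdef, hpi]
      refine ⟨w0, by rw [hgp, hfx]; exact hw0a, ?_⟩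
      intro q hq
      set q' : Fin k := Fin.cast hlen q with hq'
      have hqi : (q' : ℕ) < i := by
        have : (q' : ℕ) < (p' : ℕ) := hq
        omega
      have hfq : f q' = L.get q' := by simp [hfdef, Nat.ne_of_lt hqi]
      rw [hget q, hfq]
      exact hw0f q' hqi
    · -- original vertex L.get p', with its original witness
      have hfp : f p' = L.get p' := by simp [hfdef, hpi]
      refine ⟨W p', by rw [hgp, hfp]; exact hWadj p', ?_⟩
      intro q hq
      set q' : Fin k := Fin.cast hlen q with hq'
      have hqp : (q' : ℕ) < (p' : ℕ) := hq
      by_cases hqi : (q' : ℕ) = i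
      · have hfq : f q' = x := by simp [hfdef, hqi]
        rw [hget q, hfq]
        constructor
        · -- W p' ≠ x since x is not a valid witness anywhere
          intro he
          refine h2 ⟨p', he ▸ hWadj p', fun j hj => ?_⟩
          have := hWf p' j hj
          rw [he] at this
          exact this
        · -- ¬ Adj x (W p')
          intro ha
          obtain ⟨j, hj, hor⟩ := hdom (W p') ha
          have hjp : (j : ℕ) < (p' : ℕ) := by omega
          have := hWf p' j hjp
          rcases hor with h | h
          · exact this.1 h
          · exact this.2 h
      · have hfq : f q' = L.get q' := by simp [hfdef, hqi]
        rw [hget q, hfq]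
        exact hWf p' q' hqp
  · rw [List.mem_ofFn]
    exact ⟨⟨i, hik⟩, by simp [hfdef]⟩

/-- The union, over all Z-Grundy dominating sequences of `G`, of their vertex sets
equals the set of all vertices minus the set of isolated vertices. -/
theorem union_ZGrundySeq_eq_nonisolated {V : Type*} [Fintype V] (G : SimpleGraph V) :
    {x : V | ∃ l : List V, IsZGrundySeq G l ∧ x ∈ l}
      = Set.univ \ {v : V | ∀ w : V, ¬ G.Adj v w} := by
  ext x
  simp only [Set.mem_setOf_eq, Set.mem_diff, Set.mem_univ, true_and, not_forall, not_not]
  constructor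
  · rintro ⟨l, ⟨⟨hnd, hzs⟩, -⟩, hxl⟩
    obtain ⟨i, hi⟩ := List.mem_iff_get.mp hxl
    obtain ⟨w, hw, -⟩ := hzs i
    exact ⟨w, hi ▸ hw⟩
  · rintro ⟨w, hw⟩
    obtain ⟨L, hLz, hLmax⟩ := exists_maxZSeq G
    by_cases hxL : x ∈ L
    · exact ⟨L, ⟨hLz, hLmax⟩, hxL⟩
    by_cases hcase : ∃ t : Fin L.length, G.Adj (L.get t) x ∧ ∀ j : Fin L.length,
        (j : ℕ) < (t : ℕ) → x ≠ L.get j ∧ ¬ G.Adj (L.get j) x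
    · obtain ⟨l', hz, hlen, hmem⟩ := witness_flip G hLz hcase
      exact ⟨l', ⟨hz, fun l'' h'' => (hLmax l'' h'').trans hlen.ge⟩, hmem⟩
    · obtain ⟨l', hz, hlen, hmem⟩ := insert_case G hLz hLmax ⟨w, hw⟩ hxL hcase
      exact ⟨l', ⟨hz, fun l'' h'' => (hLmax l'' h'').trans hlen.ge⟩, hmem⟩
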